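/- Fix an odd integer k and let w ∈ ℂ satisfy w² = 3d(2d−1). For every integer j, the set of points (x : y : z) ∈ ℙ²(ℂ) with x = 0 lying on the hyperosculating conic O_{j,k} = 0 equals the set of the two distinct points (0 : −4d(d−2) + 2(d−1)w : d(d+1)u^{−k}c) and (0 : −4d(d−2) − 2(d−1)w : d(d+1)u^{−k}c); in particular this set is independent of j. Thus for every d ≥ 3 the d hyperosculating conics at the d sextactic points s_{j,k} (j = 0,…,d−1) co-linear on a line of the arrangement M have exactly two common points on the line x = 0. -/

import Mathlib

open scoped LinearAlgebra.Projectivization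

/-- The point of `ℙ²(ℂ)` with homogeneous coordinates `v` (junk value if `v = 0`). -/
noncomputable def P2mk (v : Fin 3 → ℂ) : ℙ ℂ (Fin 3 → ℂ) :=
  if hv : v ≠ 0 then Projectivization.mk ℂ v hv
  else Projectivization.mk ℂ ![1, 0, 0] (fun h => by simpa using congrFun h 0)

lemma P2mk_eq (v : Fin 3 → ℂ) (hv : v ≠ 0) : P2mk v = Projectivization.mk ℂ v hv :=
  dif_pos hv

lemma factor_lemma (D y z l w : ℂ) (hw : w^2 = 3*D*(2*D-1)) :
    D*(D+1)*(D*(D+1)*y^2 - 4*(D+1)*(2*D-3)*l^2*z^2 + 8*D*(D-2)*l*y*z)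
      = (D*(D+1)*y - (-4*D*(D-2) + 2*(D-1)*w)*l*z)
        * (D*(D+1)*y - (-4*D*(D-2) - 2*(D-1)*w)*l*z) := by
  linear_combination (4*(D-1)^2*l^2*z^2) * hw

lemma root_lemma (D w s : ℂ) (hw : w^2 = 3*D*(2*D-1)) (hs : s^2 = 1) :
    (-4*D*(D-2) + s*(2*(D-1)*w))^2 + 8*D*(D-2)*(-4*D*(D-2) + s*(2*(D-1)*w))
      - 4*D*(D+1)^2*(2*D-3) = 0 := by
  linear_combination (4*(D-1)^2*s^2) * hw + (12*D*(2*D-1)*(D-1)^2) * hs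

/-- Fix an odd `k` and `w` with `w² = 3d(2d-1)`.  For every `j`, the intersection of the
hyperosculating conic `O_{j,k}` of the Fermat curve `F_d` (at the sextactic point
`s_{j,k} = (ζ^j : 1 : u^{-k}c)`) with the line `x = 0` is the pair of distinct points
`(0 : -4d(d-2) ± 2(d-1)w : d(d+1)u^{-k}c)`; in particular it is independent of `j`.
Thus for every `d ≥ 3` the `d` hyperosculating conics at the `d` sextactic points
`s_{j,k}` (`j = 0,…,d-1`), co-linear on a line of the arrangement `M`, have exactly two
common points on the line `x = 0`. -/
theorem fermat_hyperosculating_conics_M (d : ℕ) (hd : 3 ≤ d) (ζ u c : ℂ)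
    (hζ : IsPrimitiveRoot ζ d) (hu : IsPrimitiveRoot u (2 * d)) (hc : c ^ d = 2)
    (k : ℤ) (hk : Odd k) (w : ℂ) (hw : w ^ 2 = 3 * (d : ℂ) * (2 * (d : ℂ) - 1)) :
    (∀ j : ℤ,
      {P : ℙ ℂ (Fin 3 → ℂ) | P.rep 0 = 0 ∧
          (d : ℂ) * ((d : ℂ) + 1) * ζ ^ (-2 * j) * P.rep 0 ^ 2
            + (d : ℂ) * ((d : ℂ) + 1) * P.rep 1 ^ 2
            - 4 * ((d : ℂ) + 1) * (2 * (d : ℂ) - 3) * u ^ (2 * k) * (c⁻¹) ^ 2 * P.rep 2 ^ 2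
            - 2 * ((d : ℂ) - 2) * (5 * (d : ℂ) - 3) * ζ ^ (-j) * P.rep 0 * P.rep 1
            + 8 * (d : ℂ) * ((d : ℂ) - 2) * ζ ^ (-j) * u ^ k * c⁻¹ * P.rep 0 * P.rep 2
            + 8 * (d : ℂ) * ((d : ℂ) - 2) * u ^ k * c⁻¹ * P.rep 1 * P.rep 2 = 0}
        = {P2mk ![0, -4 * (d : ℂ) * ((d : ℂ) - 2) + 2 * ((d : ℂ) - 1) * w,
                  (d : ℂ) * ((d : ℂ) + 1) * u ^ (-k) * c],
           P2mk ![0, -4 * (d : ℂ) * ((d : ℂ) - 2) - 2 * ((d : ℂ) - 1) * w,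
                  (d : ℂ) * ((d : ℂ) + 1) * u ^ (-k) * c]}) ∧
    P2mk ![0, -4 * (d : ℂ) * ((d : ℂ) - 2) + 2 * ((d : ℂ) - 1) * w,
           (d : ℂ) * ((d : ℂ) + 1) * u ^ (-k) * c] ≠
      P2mk ![0, -4 * (d : ℂ) * ((d : ℂ) - 2) - 2 * ((d : ℂ) - 1) * w,
             (d : ℂ) * ((d : ℂ) + 1) * u ^ (-k) * c] := by
  have hd0 : (d:ℂ) ≠ 0 := Nat.cast_ne_zero.2 (by omega)
  have hd1 : (d:ℂ) + 1 ≠ 0 := Nat.cast_add_one_ne_zero d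
  have hDD : (d:ℂ) * ((d:ℂ)+1) ≠ 0 := mul_ne_zero hd0 hd1
  have hu0 : u ≠ 0 := hu.ne_zero (by omega)
  have hc0 : c ≠ 0 := by
    intro h
    rw [h, zero_pow (by omega)] at hc
    exact two_ne_zero hc.symm
  have huk : u ^ k ≠ 0 := zpow_ne_zero _ hu0
  have hlm : (u^k * c⁻¹) * (u^(-k) * c) = 1 := by
    rw [zpow_neg]; field_simp
  have hl2 : u ^ (2*k) = (u^k)^2 := by rw [two_mul, zpow_add₀ hu0, sq]
  have ht : (d:ℂ) * ((d:ℂ) + 1) * u ^ (-k) * c ≠ 0 :=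
    mul_ne_zero (mul_ne_zero hDD (zpow_ne_zero _ hu0)) hc0
  have hvp : (![0, -4 * (d : ℂ) * ((d : ℂ) - 2) + 2 * ((d : ℂ) - 1) * w,
      (d : ℂ) * ((d : ℂ) + 1) * u ^ (-k) * c] : Fin 3 → ℂ) ≠ 0 := by
    intro h; exact ht (by simpa using congrFun h 2)
  have hvm : (![0, -4 * (d : ℂ) * ((d : ℂ) - 2) - 2 * ((d : ℂ) - 1) * w,
      (d : ℂ) * ((d : ℂ) + 1) * u ^ (-k) * c] : Fin 3 → ℂ) ≠ 0 := by
    intro h; exact ht (by simpa using congrFun h 2)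
  constructor
  · intro j
    ext P
    simp only [Set.mem_setOf_eq, Set.mem_insert_iff, Set.mem_singleton_iff,
      P2mk_eq _ hvp, P2mk_eq _ hvm]
    constructor
    · rintro ⟨h0, heq⟩
      rw [h0, hl2] at heq
      have key : ((d:ℂ)*((d:ℂ)+1)*P.rep 1
            - (-4*(d:ℂ)*((d:ℂ)-2) + 2*((d:ℂ)-1)*w)*(u^k*c⁻¹)*P.rep 2)
          * ((d:ℂ)*((d:ℂ)+1)*P.rep 1
            - (-4*(d:ℂ)*((d:ℂ)-2) - 2*((d:ℂ)-1)*w)*(u^k*c⁻¹)*P.rep 2) = 0 := by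
        have hf := factor_lemma (d:ℂ) (P.rep 1) (P.rep 2) (u^k*c⁻¹) w hw
        linear_combination - hf + ((d:ℂ)*((d:ℂ)+1)) * heq
      by_cases hz : P.rep 2 = 0
      · exfalso
        rcases mul_eq_zero.1 key with hfac | hfac <;>
        · apply P.rep_nonzero
          have h1 : P.rep 1 = 0 := by
            have h2 : (d:ℂ)*((d:ℂ)+1)*P.rep 1 = 0 := by
              rw [hz] at hfac; linear_combination hfac
            exact (mul_eq_zero.1 h2).resolve_left hDD
          funext i; fin_cases i <;> simp [h0, h1, hz]
      · rcases mul_eq_zero.1 key with hfac | hfac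
        · left
          rw [← Projectivization.mk_rep P, Projectivization.mk_eq_mk_iff]
          have ha0 : P.rep 2 * (u^k*c⁻¹) / ((d:ℂ)*((d:ℂ)+1)) ≠ 0 :=
            div_ne_zero (mul_ne_zero hz (mul_ne_zero huk (inv_ne_zero hc0))) hDD
          refine ⟨Units.mk0 _ ha0, ?_⟩
          have hA1 : P.rep 2 * (u^k*c⁻¹) / ((d:ℂ)*((d:ℂ)+1))
              * (-4 * (d:ℂ) * ((d:ℂ) - 2) + 2 * ((d:ℂ) - 1) * w) = P.rep 1 := by
            rw [div_mul_eq_mul_div, div_eq_iff hDD]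
            linear_combination -hfac
          have hA2 : P.rep 2 * (u^k*c⁻¹) / ((d:ℂ)*((d:ℂ)+1))
              * ((d:ℂ) * ((d:ℂ) + 1) * u ^ (-k) * c) = P.rep 2 := by
            rw [div_mul_eq_mul_div, div_eq_iff hDD]
            linear_combination (P.rep 2 * ((d:ℂ)*((d:ℂ)+1))) * hlm
          funext i
          fin_cases i <;>
            simp only [Units.smul_def, Pi.smul_apply, smul_eq_mul, Units.val_mk0,
              Matrix.cons_val_zero, Matrix.cons_val_one, Matrix.head_cons,
              Matrix.cons_val_two, Matrix.tail_cons, mul_zero]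
          · simp [h0]
          · exact hA1
          · exact hA2
        · right
          rw [← Projectivization.mk_rep P, Projectivization.mk_eq_mk_iff]
          have ha0 : P.rep 2 * (u^k*c⁻¹) / ((d:ℂ)*((d:ℂ)+1)) ≠ 0 :=
            div_ne_zero (mul_ne_zero hz (mul_ne_zero huk (inv_ne_zero hc0))) hDD
          refine ⟨Units.mk0 _ ha0, ?_⟩
          have hA1 : P.rep 2 * (u^k*c⁻¹) / ((d:ℂ)*((d:ℂ)+1))
              * (-4 * (d:ℂ) * ((d:ℂ) - 2) - 2 * ((d:ℂ) - 1) * w) = P.rep 1 := by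
            rw [div_mul_eq_mul_div, div_eq_iff hDD]
            linear_combination -hfac
          have hA2 : P.rep 2 * (u^k*c⁻¹) / ((d:ℂ)*((d:ℂ)+1))
              * ((d:ℂ) * ((d:ℂ) + 1) * u ^ (-k) * c) = P.rep 2 := by
            rw [div_mul_eq_mul_div, div_eq_iff hDD]
            linear_combination (P.rep 2 * ((d:ℂ)*((d:ℂ)+1))) * hlm
          funext i
          fin_cases i <;>
            simp only [Units.smul_def, Pi.smul_apply, smul_eq_mul, Units.val_mk0,
              Matrix.cons_val_zero, Matrix.cons_val_one, Matrix.head_cons,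
              Matrix.cons_val_two, Matrix.tail_cons, mul_zero]
          · simp [h0]
          · exact hA1
          · exact hA2
    · rintro (hP | hP) <;> subst hP
      · obtain ⟨a, ha⟩ := (Projectivization.mk_eq_mk_iff ℂ _ _ _ hvp).1
          (Projectivization.mk_rep (Projectivization.mk ℂ _ hvp))
        have e0 := congrFun ha 0
        have e1 := congrFun ha 1
        have e2 := congrFun ha 2
        simp only [Units.smul_def, Pi.smul_apply, smul_eq_mul,
          Matrix.cons_val_zero, Matrix.cons_val_one, Matrix.head_cons,
          Matrix.cons_val_two, Matrix.tail_cons, Fin.isValue] at e0 e1 e2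
        refine ⟨by rw [← e0]; ring, ?_⟩
        rw [← e0, ← e1, ← e2, hl2]
        have hr := root_lemma (d:ℂ) w 1 hw (one_pow 2)
        linear_combination ((a:ℂ)^2*(d:ℂ)*((d:ℂ)+1)) * hr
          + ((a:ℂ)^2*(d:ℂ)*((d:ℂ)+1)*(-4*(d:ℂ)*((d:ℂ)+1)^2*(2*(d:ℂ)-3)*((u^k*c⁻¹)*(u^(-k)*c)+1)
              + 8*(d:ℂ)*((d:ℂ)-2)*(-4*(d:ℂ)*((d:ℂ)-2) + 2*((d:ℂ)-1)*w))) * hlm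
      · obtain ⟨a, ha⟩ := (Projectivization.mk_eq_mk_iff ℂ _ _ _ hvm).1
          (Projectivization.mk_rep (Projectivization.mk ℂ _ hvm))
        have e0 := congrFun ha 0
        have e1 := congrFun ha 1
        have e2 := congrFun ha 2
        simp only [Units.smul_def, Pi.smul_apply, smul_eq_mul,
          Matrix.cons_val_zero, Matrix.cons_val_one, Matrix.head_cons,
          Matrix.cons_val_two, Matrix.tail_cons, Fin.isValue] at e0 e1 e2
        refine ⟨by rw [← e0]; ring, ?_⟩
        rw [← e0, ← e1, ← e2, hl2]
        have hr := root_lemma (d:ℂ) w (-1) hw (by ring)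
        linear_combination ((a:ℂ)^2*(d:ℂ)*((d:ℂ)+1)) * hr
          + ((a:ℂ)^2*(d:ℂ)*((d:ℂ)+1)*(-4*(d:ℂ)*((d:ℂ)+1)^2*(2*(d:ℂ)-3)*((u^k*c⁻¹)*(u^(-k)*c)+1)
              + 8*(d:ℂ)*((d:ℂ)-2)*(-4*(d:ℂ)*((d:ℂ)-2) - 2*((d:ℂ)-1)*w))) * hlm
  · intro h
    rw [P2mk_eq _ hvp, P2mk_eq _ hvm, Projectivization.mk_eq_mk_iff] at h
    obtain ⟨a, ha⟩ := h
    have e1 := congrFun ha 1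
    have e2 := congrFun ha 2
    simp only [Units.smul_def, Pi.smul_apply, smul_eq_mul,
      Matrix.cons_val_one, Matrix.head_cons, Matrix.cons_val_zero,
      Matrix.cons_val_two, Matrix.tail_cons, Fin.isValue] at e1 e2
    have ha1 : (a:ℂ) = 1 := by
      have := mul_right_cancel₀ ht (e2.trans (one_mul _).symm)
      exact this
    rw [ha1, one_mul] at e1
    have hw0 : ((d:ℂ) - 1) * w = 0 := by linear_combination (-(1:ℂ)/4) * e1
    rcases mul_eq_zero.1 hw0 with h1 | h1
    · have : (d:ℂ) = 1 := by linear_combination h1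
      have : (d:ℕ) = 1 := by exact_mod_cast this
      omega
    · rw [h1] at hw
      have h3 : (d:ℂ) * (2*(d:ℂ)-1) = 0 := by linear_combination (-(1:ℂ)/3) * hw
      rcases mul_eq_zero.1 h3 with h4 | h4
      · exact hd0 h4
      · have : (2*(d:ℕ):ℂ) = 1 := by push_cast; linear_combination h4
        have : 2*(d:ℕ) = 1 := by exact_mod_cast this
        omega
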